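/- Let c ∈ Mat_n(ℂ) be a positive definite (positive invertible) matrix. Equip Mat_n(ℂ) with the inner product ⟨x, y⟩ = Tr(y* x c) · Tr(c^{-1}) (linear in the first variable), and equip the algebraic tensor product Mat_n(ℂ) ⊗ Mat_n(ℂ) with the induced inner product ⟨a ⊗ b, c' ⊗ d⟩ = ⟨a, c'⟩⟨b, d⟩. Then the multiplication map m : Mat_n(ℂ) ⊗ Mat_n(ℂ) → Mat_n(ℂ) satisfies m m* = id, where m* is the adjoint of m with respect to these inner products. -/

import Mathlib

/-!
STATEMENT 5.  Let c ∈ Mat_n(ℂ) be positive definite.  Equip Mat_n(ℂ) with the inner product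
⟨x, y⟩ = Tr(y* x c) · Tr(c⁻¹) (in Mathlib's convention, conjugate-linear in the first slot:
⟪x, y⟫ = Tr(x* y c) · Tr(c⁻¹)), and Mat_n(ℂ) ⊗ Mat_n(ℂ) with the induced inner product.
Then the multiplication map m satisfies m m* = id, where m* is the adjoint of m.

The adjoint is encoded as the (unique) linear map `mstar` satisfying the pairing identity
⟪a ⊗ b, m* y⟫ = ⟪m(a ⊗ b), y⟫ = ⟪a * b, y⟫, where ⟪a ⊗ b, ·⟫ is implemented by
`matPair c a b`, and m on the tensor product is `LinearMap.mul' ℂ _`.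
-/

open scoped TensorProduct ComplexOrder

/-- The inner product `⟪a, ·⟫ = Tr(aᴴ · c) Tr(c⁻¹)` as a linear functional on `Mat_n(ℂ)`. -/
noncomputable def matInn {n : ℕ} (c a : Matrix (Fin n) (Fin n) ℂ) :
    Matrix (Fin n) (Fin n) ℂ →ₗ[ℂ] ℂ where
  toFun y := (a.conjTranspose * y * c).trace * c⁻¹.trace
  map_add' x y := by
    simp [Matrix.mul_add, Matrix.add_mul, Matrix.trace_add, add_mul]
  map_smul' r x := by
    simp only [Matrix.mul_smul, Matrix.smul_mul, Matrix.trace_smul, smul_eq_mul,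
      RingHom.id_apply]
    ring

/-- The linear functional `⟪a ⊗ b, ·⟫` on `Mat_n(ℂ) ⊗ Mat_n(ℂ)` for the induced inner
product. -/
noncomputable def matPair {n : ℕ} (c a b : Matrix (Fin n) (Fin n) ℂ) :
    TensorProduct ℂ (Matrix (Fin n) (Fin n) ℂ) (Matrix (Fin n) (Fin n) ℂ) →ₗ[ℂ] ℂ :=
  TensorProduct.lift ((LinearMap.mul ℂ ℂ).compl₁₂ (matInn c a) (matInn c b))

section Aux
variable {n : ℕ}

lemma matPair_tmul (c a b x y : Matrix (Fin n) (Fin n) ℂ) :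
    matPair c a b (x ⊗ₜ[ℂ] y)
      = ((a.conjTranspose * x * c).trace * c⁻¹.trace)
        * ((b.conjTranspose * y * c).trace * c⁻¹.trace) := by
  simp [matPair, matInn]

lemma trace_mul_stdBasis (A : Matrix (Fin n) (Fin n) ℂ) (k l : Fin n) :
    (A * Matrix.single k l 1).trace = A l k := by
  simp only [Matrix.trace, Matrix.diag, Matrix.mul_apply, Matrix.single,
    Matrix.of_apply, mul_ite, mul_one, mul_zero, ite_and]
  rw [Finset.sum_comm]
  simp [Finset.sum_ite_eq, Finset.sum_ite_eq']

lemma key_sum (A B : Matrix (Fin n) (Fin n) ℂ) :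
    ∑ k : Fin n, ∑ l : Fin n,
      (A * Matrix.single l k 1).trace * (B * Matrix.single k l 1).trace
      = (A * B).trace := by
  simp only [trace_mul_stdBasis]
  simp [Matrix.trace, Matrix.diag, Matrix.mul_apply]

lemma sum_entries (z : Matrix (Fin n) (Fin n) ℂ) :
    ∑ i : Fin n, ∑ j : Fin n, z i j • Matrix.single i j (1 : ℂ) = z := by
  conv_rhs => rw [Matrix.matrix_eq_sum_single z]
  simp [Matrix.smul_single]

end Aux

section Main
variable {n : ℕ}

noncomputable def mstarF (c : Matrix (Fin n) (Fin n) ℂ) :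
    Matrix (Fin n) (Fin n) ℂ →ₗ[ℂ]
      TensorProduct ℂ (Matrix (Fin n) (Fin n) ℂ) (Matrix (Fin n) (Fin n) ℂ) :=
  (c⁻¹.trace)⁻¹ • ∑ k : Fin n, ∑ l : Fin n,
    ((TensorProduct.mk ℂ (Matrix (Fin n) (Fin n) ℂ) (Matrix (Fin n) (Fin n) ℂ)).flip
        (Matrix.single k l 1)).comp
      (LinearMap.mulRight ℂ (Matrix.single l k 1 * c⁻¹))

lemma mstarF_apply (c y : Matrix (Fin n) (Fin n) ℂ) :
    mstarF c y = (c⁻¹.trace)⁻¹ • ∑ k : Fin n, ∑ l : Fin n,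
      (y * (Matrix.single l k 1 * c⁻¹)) ⊗ₜ[ℂ] Matrix.single k l (1 : ℂ) := by
  simp [mstarF, LinearMap.sum_apply, Matrix.mul_assoc]

theorem key1 (c : Matrix (Fin n) (Fin n) ℂ) (hc : c.PosDef)
    (a b y : Matrix (Fin n) (Fin n) ℂ) :
    matPair c a b (mstarF c y) = matInn c (a * b) y := by
  have hinv : c⁻¹ * c = 1 :=
    Matrix.nonsing_inv_mul c (isUnit_iff_ne_zero.mpr hc.det_pos.ne')
  rw [mstarF_apply, map_smul]
  simp only [map_sum, matPair_tmul]
  have hterm : ∀ k l : Fin n,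
      ((a.conjTranspose * (y * (Matrix.single l k 1 * c⁻¹)) * c).trace * c⁻¹.trace)
        * ((b.conjTranspose * Matrix.single k l 1 * c).trace * c⁻¹.trace)
      = (c⁻¹.trace * c⁻¹.trace) *
          (((a.conjTranspose * y) * Matrix.single l k 1).trace
            * ((c * b.conjTranspose) * Matrix.single k l 1).trace) := by
    intro k l
    have h1 : a.conjTranspose * (y * (Matrix.single l k 1 * c⁻¹)) * c
        = (a.conjTranspose * y) * Matrix.single l k 1 := by
      rw [show a.conjTranspose * (y * (Matrix.single l k 1 * c⁻¹)) * c
        = ((a.conjTranspose * y) * Matrix.single l k 1) * (c⁻¹ * c) by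
          simp only [Matrix.mul_assoc], hinv, Matrix.mul_one]
    have h2 : (b.conjTranspose * Matrix.single k l 1 * c).trace
        = ((c * b.conjTranspose) * Matrix.single k l 1).trace := by
      rw [Matrix.trace_mul_comm, Matrix.mul_assoc]
    rw [h1, h2]; ring
  simp only [hterm, ← Finset.mul_sum, key_sum]
  have h4 : ((a.conjTranspose * y) * (c * b.conjTranspose)).trace
      = ((a*b).conjTranspose * y * c).trace := by
    rw [show (a.conjTranspose * y) * (c * b.conjTranspose)
        = (a.conjTranspose * y * c) * b.conjTranspose by simp only [Matrix.mul_assoc],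
      Matrix.trace_mul_comm, Matrix.conjTranspose_mul]
    simp only [Matrix.mul_assoc]
  rw [h4]
  simp only [matInn, LinearMap.coe_mk, AddHom.coe_mk, smul_eq_mul]
  rcases eq_or_ne c⁻¹.trace 0 with h | h
  · simp [h]
  · rw [mul_assoc, inv_mul_cancel_left₀ h, mul_comm]

end Main

section Main2
variable {n : ℕ}

lemma sum_std_inv_std (c : Matrix (Fin n) (Fin n) ℂ) :
    ∑ k : Fin n, ∑ l : Fin n,
      Matrix.single l k (1:ℂ) * c⁻¹ * Matrix.single k l 1
      = c⁻¹.trace • (1 : Matrix (Fin n) (Fin n) ℂ) := by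
  ext i j
  simp only [Matrix.sum_apply, Matrix.smul_apply, Matrix.one_apply, Matrix.mul_apply,
    Matrix.single, Matrix.of_apply, ite_mul, mul_ite, one_mul, mul_one, zero_mul,
    mul_zero, ite_and, smul_eq_mul]
  rw [Finset.sum_comm]
  by_cases hij : i = j
  · subst hij
    simp [Finset.sum_ite_eq, Finset.sum_ite_eq', Matrix.trace, Matrix.diag]
  · have hji : ¬ j = i := fun h => hij h.symm
    simp [hij, hji, Finset.sum_ite_eq, Finset.sum_ite_eq']

theorem key3 (c : Matrix (Fin n) (Fin n) ℂ) (hTr : c⁻¹.trace ≠ 0)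
    (y : Matrix (Fin n) (Fin n) ℂ) :
    LinearMap.mul' ℂ (Matrix (Fin n) (Fin n) ℂ) (mstarF c y) = y := by
  rw [mstarF_apply, map_smul]
  simp only [map_sum, LinearMap.mul'_apply]
  have h1 : ∀ k l : Fin n, y * (Matrix.single l k (1:ℂ) * c⁻¹) * Matrix.single k l 1
      = y * (Matrix.single l k (1:ℂ) * c⁻¹ * Matrix.single k l 1) := by
    intro k l; simp only [Matrix.mul_assoc]
  simp only [h1, ← Finset.mul_sum, sum_std_inv_std]
  rw [Matrix.mul_smul, Matrix.mul_one, smul_smul, inv_mul_cancel₀ hTr, one_smul]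

theorem sep_key (c : Matrix (Fin n) (Fin n) ℂ) (hc : c.PosDef)
    (t : TensorProduct ℂ (Matrix (Fin n) (Fin n) ℂ) (Matrix (Fin n) (Fin n) ℂ)) :
    (c⁻¹.trace * c⁻¹.trace) • t
      = ∑ i : Fin n, ∑ j : Fin n, ∑ k : Fin n, ∑ l : Fin n,
        matPair c (Matrix.single i j 1) (Matrix.single k l 1) t •
          ((Matrix.single i j (1:ℂ) * c⁻¹) ⊗ₜ[ℂ] (Matrix.single k l (1:ℂ) * c⁻¹)) := by
  have hinv : c * c⁻¹ = 1 :=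
    Matrix.mul_nonsing_inv c (isUnit_iff_ne_zero.mpr hc.det_pos.ne')
  induction t using TensorProduct.induction_on with
  | zero => simp
  | add s t hs ht =>
    simp only [map_add, add_smul, smul_add, hs, ht, ← Finset.sum_add_distrib]
  | tmul x y =>
    simp only [matPair_tmul]
    have hct : ∀ (z : Matrix (Fin n) (Fin n) ℂ) (i j : Fin n),
        ((Matrix.single i j (1:ℂ)).conjTranspose * z * c).trace = (z * c) i j := by
      intro z i j
      have hT : (Matrix.single i j (1:ℂ)).conjTranspose
          = Matrix.single j i (1:ℂ) := by
        ext a b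
        simp only [Matrix.conjTranspose_apply, Matrix.single, Matrix.of_apply,
          apply_ite star, star_one, star_zero]
        simp [and_comm]
      rw [hT, Matrix.mul_assoc, Matrix.trace_mul_comm, trace_mul_stdBasis]
    simp only [hct]
    have recon : ∀ z : Matrix (Fin n) (Fin n) ℂ,
        ∑ i : Fin n, ∑ j : Fin n, (z * c) i j • (Matrix.single i j (1:ℂ) * c⁻¹) = z := by
      intro z
      have : ∑ i : Fin n, ∑ j : Fin n, (z * c) i j • (Matrix.single i j (1:ℂ) * c⁻¹)
          = (∑ i : Fin n, ∑ j : Fin n, (z * c) i j • Matrix.single i j (1:ℂ)) * c⁻¹ := by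
        simp only [← smul_mul_assoc, ← Finset.sum_mul]
      rw [this, sum_entries, Matrix.mul_assoc, hinv, Matrix.mul_one]
    have recon2 : (x ⊗ₜ[ℂ] y :
        TensorProduct ℂ (Matrix (Fin n) (Fin n) ℂ) (Matrix (Fin n) (Fin n) ℂ))
        = ∑ i : Fin n, ∑ j : Fin n, ∑ k : Fin n, ∑ l : Fin n,
          ((x * c) i j • (Matrix.single i j (1:ℂ) * c⁻¹)) ⊗ₜ[ℂ]
            ((y * c) k l • (Matrix.single k l (1:ℂ) * c⁻¹)) := by
      conv_lhs => rw [← recon x, ← recon y]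
      rw [TensorProduct.sum_tmul]; refine Finset.sum_congr rfl fun i _ => ?_
      rw [TensorProduct.sum_tmul]; refine Finset.sum_congr rfl fun j _ => ?_
      rw [TensorProduct.tmul_sum]; refine Finset.sum_congr rfl fun k _ => ?_
      rw [TensorProduct.tmul_sum]
    rw [recon2]
    simp only [Finset.smul_sum, TensorProduct.smul_tmul_smul, smul_smul]
    refine Finset.sum_congr rfl fun i _ => Finset.sum_congr rfl fun j _ =>
      Finset.sum_congr rfl fun k _ => Finset.sum_congr rfl fun l _ => ?_
    congr 1
    ring
end Main2

lemma trace_inv_ne_zero {n : ℕ} (hn : 0 < n) (c : Matrix (Fin n) (Fin n) ℂ)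
    (hc : c.PosDef) : c⁻¹.trace ≠ 0 := by
  have h := hc.inv
  have hd : ∀ i, 0 < c⁻¹ i i := by
    intro i
    have := (Matrix.posDef_iff_dotProduct_mulVec.mp h).2 (x := Pi.single i 1) (by simp [Function.ne_iff])
    simpa [dotProduct, Matrix.mulVec, Pi.single_apply, Finset.sum_ite_eq] using this
  have : 0 < c⁻¹.trace := by
    rw [Matrix.trace]
    exact Finset.sum_pos (fun i _ => hd i)
      (by simp [Finset.univ_nonempty_iff, Fin.pos_iff_nonempty.mp hn])
  exact ne_of_gt this


theorem statement5 {n : ℕ} (c : Matrix (Fin n) (Fin n) ℂ) (hc : c.PosDef) :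
    ∃ mstar : Matrix (Fin n) (Fin n) ℂ →ₗ[ℂ]
        TensorProduct ℂ (Matrix (Fin n) (Fin n) ℂ) (Matrix (Fin n) (Fin n) ℂ),
      -- mstar is the adjoint of the multiplication map m …
      (∀ a b y : Matrix (Fin n) (Fin n) ℂ,
        matPair c a b (mstar y) = matInn c (a * b) y) ∧
      -- … (and it is the unique map with this property) …
      (∀ mstar' : Matrix (Fin n) (Fin n) ℂ →
          TensorProduct ℂ (Matrix (Fin n) (Fin n) ℂ) (Matrix (Fin n) (Fin n) ℂ),
        (∀ a b y : Matrix (Fin n) (Fin n) ℂ,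
          matPair c a b (mstar' y) = matInn c (a * b) y) →
        ∀ y, mstar' y = mstar y) ∧
      -- … and m m* = id:
      (∀ y : Matrix (Fin n) (Fin n) ℂ,
        LinearMap.mul' ℂ (Matrix (Fin n) (Fin n) ℂ) (mstar y) = y) := by
  refine ⟨mstarF c, fun a b y => key1 c hc a b y, ?_, ?_⟩
  · rcases Nat.eq_zero_or_pos n with rfl | hn
    · have hall : ∀ s t : TensorProduct ℂ (Matrix (Fin 0) (Fin 0) ℂ)
          (Matrix (Fin 0) (Fin 0) ℂ), s = t := by
        have hz : ∀ t : TensorProduct ℂ (Matrix (Fin 0) (Fin 0) ℂ)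
            (Matrix (Fin 0) (Fin 0) ℂ), t = 0 := by
          intro t
          induction t using TensorProduct.induction_on with
          | zero => rfl
          | add s t hs ht => rw [hs, ht, add_zero]
          | tmul x y =>
            have hx : x = 0 := by ext i j; exact i.elim0
            rw [hx, TensorProduct.zero_tmul]
        intro s t; rw [hz s, hz t]
      intro mstar' _ y; exact hall _ _
    · intro mstar' h' y
      have hTr := trace_inv_ne_zero hn c hc
      have h1 := sep_key c hc (mstar' y)
      have h2 := sep_key c hc (mstarF c y)
      have heq : (c⁻¹.trace * c⁻¹.trace) • mstar' y
          = (c⁻¹.trace * c⁻¹.trace) • mstarF c y := by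
        rw [h1, h2]
        refine Finset.sum_congr rfl fun i _ => Finset.sum_congr rfl fun j _ =>
          Finset.sum_congr rfl fun k _ => Finset.sum_congr rfl fun l _ => ?_
        rw [h' _ _ y, key1 c hc]
      exact smul_right_injective _ (mul_ne_zero hTr hTr) heq
  · rcases Nat.eq_zero_or_pos n with rfl | hn
    · intro y; ext i j; exact i.elim0
    · exact fun y => key3 c (trace_inv_ne_zero hn c hc) y
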